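/- Let P : Dom(P) ⊆ H₁ → H₂ be an unbounded Fredholm operator and A : H₁ → H₂ a bounded linear operator with Dom(A) = H₁. If ‖A‖ is sufficiently small, then P + A (with domain Dom(P)) is Fredholm, ind(P + A) = ind P, dim ker(P + A) ≤ dim ker P, and codim R(P + A) ≤ codim R(P). -/

import Mathlib

open Module

def IsFredholmPMap {H₁ H₂ : Type*}
    [NormedAddCommGroup H₁] [InnerProductSpace ℂ H₁] [CompleteSpace H₁]
    [NormedAddCommGroup H₂] [InnerProductSpace ℂ H₂] [CompleteSpace H₂]
    (P : H₁ →ₗ.[ℂ] H₂) : Prop :=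
  IsClosed (P.graph : Set (H₁ × H₂)) ∧
  IsClosed ((LinearMap.range P.toFun : Submodule ℂ H₂) : Set H₂) ∧
  FiniteDimensional ℂ (LinearMap.ker P.toFun) ∧
  FiniteDimensional ℂ (H₂ ⧸ LinearMap.range P.toFun)

/-- The index `dim ker P − codim R(P)` of an unbounded operator. -/
noncomputable def indPMap {H₁ H₂ : Type*}
    [NormedAddCommGroup H₁] [InnerProductSpace ℂ H₁] [CompleteSpace H₁]
    [NormedAddCommGroup H₂] [InnerProductSpace ℂ H₂] [CompleteSpace H₂]
    (P : H₁ →ₗ.[ℂ] H₂) : ℤ :=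
  (finrank ℂ (LinearMap.ker P.toFun) : ℤ) - (finrank ℂ (H₂ ⧸ LinearMap.range P.toFun) : ℤ)

/-- The sum `P + A` of an unbounded operator and an everywhere-defined bounded
operator, with domain `Dom(P)`. -/
def addBounded {H₁ H₂ : Type*}
    [NormedAddCommGroup H₁] [InnerProductSpace ℂ H₁] [CompleteSpace H₁]
    [NormedAddCommGroup H₂] [InnerProductSpace ℂ H₂] [CompleteSpace H₂]
    (P : H₁ →ₗ.[ℂ] H₂) (A : H₁ →L[ℂ] H₂) : H₁ →ₗ.[ℂ] H₂ :=
  ⟨P.domain, P.toFun + (A : H₁ →ₗ[ℂ] H₂).comp P.domain.subtype⟩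

open Submodule ContinuousLinearMap

set_option maxHeartbeats 1000000 in
set_option synthInstance.maxHeartbeats 400000 in
theorem core_stab {G K : Type*} [NormedAddCommGroup G] [InnerProductSpace ℂ G] [CompleteSpace G]
    [NormedAddCommGroup K] [InnerProductSpace ℂ K] [CompleteSpace K]
    (T : G →L[ℂ] K) (hker : FiniteDimensional ℂ (LinearMap.ker (T : G →ₗ[ℂ] K)))
    (hclosed : IsClosed (LinearMap.range (T : G →ₗ[ℂ] K) : Set K))
    (hcoker : FiniteDimensional ℂ (K ⧸ LinearMap.range (T : G →ₗ[ℂ] K))) :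
    ∃ ε > 0, ∀ B : G →L[ℂ] K, ‖B‖ < ε →
      IsClosed (LinearMap.range (((T + B) : G →L[ℂ] K) : G →ₗ[ℂ] K) : Set K) ∧
      FiniteDimensional ℂ (LinearMap.ker (((T + B) : G →L[ℂ] K) : G →ₗ[ℂ] K)) ∧
      FiniteDimensional ℂ (K ⧸ LinearMap.range (((T + B) : G →L[ℂ] K) : G →ₗ[ℂ] K)) ∧
      finrank ℂ (LinearMap.ker (((T + B) : G →L[ℂ] K) : G →ₗ[ℂ] K)) ≤ finrank ℂ (LinearMap.ker (T : G →ₗ[ℂ] K)) ∧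
      finrank ℂ (K ⧸ LinearMap.range (((T + B) : G →L[ℂ] K) : G →ₗ[ℂ] K)) ≤
        finrank ℂ (K ⧸ LinearMap.range (T : G →ₗ[ℂ] K)) ∧
      (finrank ℂ (LinearMap.ker (((T + B) : G →L[ℂ] K) : G →ₗ[ℂ] K)) : ℤ) -
          finrank ℂ (K ⧸ LinearMap.range (((T + B) : G →L[ℂ] K) : G →ₗ[ℂ] K)) =
        (finrank ℂ (LinearMap.ker (T : G →ₗ[ℂ] K)) : ℤ) - finrank ℂ (K ⧸ LinearMap.range (T : G →ₗ[ℂ] K)) := by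
  classical
  set N : Submodule ℂ G := LinearMap.ker (T : G →ₗ[ℂ] K) with hN
  set R : Submodule ℂ K := LinearMap.range (T : G →ₗ[ℂ] K) with hR
  haveI : CompleteSpace R := hclosed.completeSpace_coe
  haveI : CompleteSpace N := FiniteDimensional.complete ℂ N
  set X : Submodule ℂ G := Nᗮ with hX
  set W : Submodule ℂ K := Rᗮ with hW
  haveI : CompleteSpace X := (Submodule.isClosed_orthogonal N).completeSpace_coe
  haveI : CompleteSpace W := (Submodule.isClosed_orthogonal R).completeSpace_coe
  have hNX : IsCompl N X := N.isCompl_orthogonal_of_hasOrthogonalProjection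
  have hRW : IsCompl R W := R.isCompl_orthogonal_of_hasOrthogonalProjection
  -- W ≃ coker
  haveI : FiniteDimensional ℂ (K ⧸ R) := hcoker
  have eW : (K ⧸ R) ≃ₗ[ℂ] W := Submodule.quotientEquivOfIsCompl R W hRW
  haveI : FiniteDimensional ℂ W := eW.finiteDimensional
  have hfW : finrank ℂ W = finrank ℂ (K ⧸ R) := eW.symm.finrank_eq
  -- projections
  set pR : K →L[ℂ] R := orthogonalProjection R with hpR
  set pW : K →L[ℂ] W := orthogonalProjection W with hpW
  set pN : G →L[ℂ] N := orthogonalProjection N with hpN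
  set pX : G →L[ℂ] X := orthogonalProjection X with hpX
  have hsumK : ∀ k : K, (pR k : K) + (pW k : K) = k := by
    intro k
    exact R.starProjection_add_starProjection_orthogonal k
  have hsumG : ∀ g : G, (pN g : G) + (pX g : G) = g := by
    intro g
    exact N.starProjection_add_starProjection_orthogonal g
  have hpRW : ∀ w : K, w ∈ W → pR w = 0 := fun w hw =>
    Submodule.orthogonalProjectionOnto_apply_of_mem_orthogonal hw
  have hpWR : ∀ r : K, r ∈ R → pW r = 0 := by
    intro r hr
    exact Submodule.orthogonalProjectionOnto_apply_of_mem_orthogonal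
      (Submodule.le_orthogonal_orthogonal R hr)
  have hpWW : ∀ w : W, pW (w : K) = w := fun w =>
    orthogonalProjection_mem_subspace_eq_self w
  have hpNX : ∀ x : X, pN (x : G) = 0 := by
    intro x
    exact Submodule.orthogonalProjectionOnto_apply_of_mem_orthogonal x.2
  -- the invertible part T₁ : X ≃L R
  set T₁ : X →L[ℂ] R := pR.comp (T.comp X.subtypeL) with hT₁
  have hT₁app : ∀ x : X, (T₁ x : K) = T (x : G) := fun x =>
    starProjection_eq_self_iff.mpr (LinearMap.mem_range_self (T : G →ₗ[ℂ] K) (x : G))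

  -- T₁ is bijective
  have hkerT₁ : LinearMap.ker (T₁ : X →ₗ[ℂ] R) = ⊥ := by
    rw [LinearMap.ker_eq_bot']
    intro x hx
    have hTx : T (x : G) = 0 := by
      have h1 : (T₁ x : K) = 0 := by rw [show T₁ x = 0 from hx]; rfl
      rw [hT₁app] at h1; exact h1
    have hxN : (x : G) ∈ N := hTx
    have := (hNX.disjoint.le_bot : N ⊓ X ≤ ⊥) ⟨hxN, x.2⟩
    exact Subtype.ext this
  have hrangeT₁ : LinearMap.range (T₁ : X →ₗ[ℂ] R) = ⊤ := by
    rw [LinearMap.range_eq_top]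
    rintro ⟨r, v, hv⟩
    refine ⟨pX v, Subtype.ext ?_⟩
    show ((T₁ (pX v) : R) : K) = r
    rw [hT₁app]
    have hv' : (pN v : G) + (pX v : G) = v := hsumG v
    have hTn : T (pN v : G) = 0 := (pN v).2
    calc T ((pX v : G)) = T ((pN v : G)) + T ((pX v : G)) := by rw [hTn, zero_add]
    _ = T v := by rw [← map_add, hv']
    _ = r := hv
  set e : X ≃L[ℂ] R := ContinuousLinearEquiv.ofBijective T₁ hkerT₁ hrangeT₁ with he
  have he_app : ∀ x : X, e x = T₁ x := fun x => rfl
  set c : ℝ := ‖(e.symm : R →L[ℂ] X)‖ with hc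
  have hc0 : 0 ≤ c := by positivity
  refine ⟨1 / (c + 1), by positivity, ?_⟩
  intro B hB
  set S : G →L[ℂ] K := T + B with hS
  set B' : X →L[ℂ] R := pR.comp (B.comp X.subtypeL) with hB'
  have hB'le : ‖B'‖ ≤ ‖B‖ := by
    have key : ∀ x : X, ‖B' x‖ ≤ ‖B‖ * ‖x‖ := by
      intro x
      calc ‖B' x‖ = ‖pR (B (x : G))‖ := rfl
      _ ≤ 1 * ‖B (x : G)‖ :=
        ContinuousLinearMap.le_of_opNorm_le pR (orthogonalProjection_norm_le R) _
      _ = ‖B (x : G)‖ := one_mul _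
      _ ≤ ‖B‖ * ‖x‖ := B.le_opNorm (x : G)
    exact ContinuousLinearMap.opNorm_le_bound B' (norm_nonneg B) key
  set V : X →L[ℂ] X := (e.symm : R →L[ℂ] X).comp B' with hV
  have hVlt : ‖V‖ < 1 := by
    calc ‖V‖ ≤ c * ‖B'‖ := ContinuousLinearMap.opNorm_comp_le _ _
    _ ≤ c * ‖B‖ := mul_le_mul_of_nonneg_left hB'le hc0
    _ ≤ (c + 1) * ‖B‖ := mul_le_mul_of_nonneg_right (by linarith) (norm_nonneg _)
    _ < (c + 1) * (1 / (c + 1)) := by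
      have : (0:ℝ) < c + 1 := by linarith
      exact mul_lt_mul_of_pos_left hB this
    _ = 1 := by field_simp
  set unit : (X →L[ℂ] X)ˣ := Units.oneSub (-V) (lt_of_le_of_lt (norm_neg V).le hVlt) with hunit
  set u' : X ≃L[ℂ] X := ContinuousLinearEquiv.unitsEquiv ℂ X unit with hu'
  have hu'app : ∀ x : X, u' x = x + V x := by
    intro x
    show (unit : X →L[ℂ] X) x = x + V x
    have : (unit : X →L[ℂ] X) = 1 - (-V) := rfl
    rw [this]; simp
  set eS : X ≃L[ℂ] R := u'.trans e with heS_def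
  have heS : ∀ x : X, eS x = pR (S (x : G)) := by
    intro x
    have h1 : eS x = e (x + V x) := by
      show e (u' x) = e (x + V x); rw [hu'app]
    rw [h1, map_add]
    have h2 : e (V x) = B' x := by
      show e (e.symm (B' x)) = B' x
      exact e.apply_symm_apply _
    rw [h2]
    have h3 : pR (S (x : G)) = T₁ x + B' x := by
      show pR (T (x : G) + B (x : G)) = _
      rw [map_add]; rfl
    rw [h3, he_app]
  -- the Schur complement map
  set q : N →L[ℂ] R := pR.comp (S.comp N.subtypeL) with hq
  set D : X →L[ℂ] W := pW.comp (S.comp X.subtypeL) with hD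
  set schur : N →L[ℂ] W :=
    pW.comp (S.comp N.subtypeL) - D.comp ((eS.symm : R →L[ℂ] X).comp q) with hschur
  have hschur_app : ∀ n : N,
      schur n = pW (S (n : G)) - pW (S ((eS.symm (pR (S (n : G))) : X) : G)) := fun n => rfl
  set j : N →L[ℂ] G := N.subtypeL - X.subtypeL.comp ((eS.symm : R →L[ℂ] X).comp q) with hj
  have hj_app : ∀ n : N, j n = (n : G) - ((eS.symm (pR (S (n : G))) : X) : G) := fun n => rfl
  have hpNN : ∀ n : N, pN (n : G) = n := fun n => orthogonalProjection_mem_subspace_eq_self n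
  have hpRR : ∀ r : R, pR (r : K) = r := fun r => orthogonalProjection_mem_subspace_eq_self r
  have hjinj : Function.Injective j := by
    intro a b hab
    have h1 : ∀ n : N, pN (j n) = n := by
      intro n
      rw [hj_app, map_sub, hpNN, hpNX, sub_zero]
    have := congrArg pN hab
    rwa [h1, h1] at this
  -- key kernel identity
  have hSj : ∀ n : N, pR (S (j n)) = 0 ∧ pW (S (j n)) = schur n := by
    intro n
    constructor
    · rw [hj_app, map_sub, map_sub]
      have : pR (S ((eS.symm (pR (S (n : G))) : X) : G)) = pR (S (n : G)) := by
        rw [← heS, eS.apply_symm_apply]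
      rw [this, sub_self]
    · rw [hj_app, map_sub, map_sub, hschur_app]
  have hkermap : LinearMap.ker (S : G →ₗ[ℂ] K) =
      (LinearMap.ker (schur : N →ₗ[ℂ] W)).map (j : N →ₗ[ℂ] G) := by
    ext v
    simp only [Submodule.mem_map, LinearMap.mem_ker, ContinuousLinearMap.coe_coe]
    constructor
    · intro hv
      have hsplit : ((pN v : G) : G) + ((pX v : G) : G) = v := hsumG v
      refine ⟨pN v, ?_, ?_⟩
      · have hRsplit : pR (S ((pN v : G))) + eS (pX v) = 0 := by
          rw [heS, ← map_add, ← map_add, hsplit, hv]; simp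
        have hx : pX v = eS.symm (-(pR (S ((pN v : G))))) := by
          have h1 : eS (pX v) = -(pR (S ((pN v : G)))) :=
            eq_neg_of_add_eq_zero_right hRsplit
          rw [← h1, ContinuousLinearEquiv.symm_apply_apply]
        rw [hschur_app]
        have hx2 : ((eS.symm (pR (S ((pN v : G)))) : X) : G) = -((pX v : G) : G) := by
          have : eS.symm (-(pR (S ((pN v : G))))) = -(eS.symm (pR (S ((pN v : G))))) :=
            map_neg _ _
          rw [this] at hx
          have := congrArg (fun y : X => -((y : X) : G)) hx
          simpa using this.symm
        rw [hx2]
        have : S ((pN v : G) : G) - S (-((pX v : G) : G)) = S v := by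
          rw [map_neg, sub_neg_eq_add, ← map_add, hsplit]
        rw [← map_sub, this, hv, map_zero]
      · have hRsplit : pR (S ((pN v : G))) + eS (pX v) = 0 := by
          rw [heS, ← map_add, ← map_add, hsplit, hv]; simp
        have hx : pX v = eS.symm (-(pR (S ((pN v : G))))) := by
          have h1 : eS (pX v) = -(pR (S ((pN v : G)))) :=
            eq_neg_of_add_eq_zero_right hRsplit
          rw [← h1, ContinuousLinearEquiv.symm_apply_apply]
        have hx2 : ((eS.symm (pR (S ((pN v : G)))) : X) : G) = -((pX v : G) : G) := by
          have hmn : eS.symm (-(pR (S ((pN v : G))))) = -(eS.symm (pR (S ((pN v : G))))) :=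
            map_neg _ _
          rw [hmn] at hx
          have := congrArg (fun y : X => -((y : X) : G)) hx
          simpa using this.symm
        show j (pN v) = v
        rw [hj_app, hx2, sub_neg_eq_add, hsplit]
    · rintro ⟨n, hn, rfl⟩
      have h1 := (hSj n).1
      have h2 := (hSj n).2
      rw [hn] at h2
      have := hsumK (S (j n))
      rw [h1, h2] at this
      simpa using this.symm
  
  haveI : FiniteDimensional ℂ N := hker
  have hjinj' : Function.Injective (j : N →ₗ[ℂ] G) := hjinj
  have kerEquiv : (LinearMap.ker (S : G →ₗ[ℂ] K)) ≃ₗ[ℂ] (LinearMap.ker (schur : N →ₗ[ℂ] W)) :=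
    (LinearEquiv.ofEq _ _ hkermap).trans
      (Submodule.equivMapOfInjective (j : N →ₗ[ℂ] G) hjinj' (LinearMap.ker (schur : N →ₗ[ℂ] W))).symm
  haveI kerfin : FiniteDimensional ℂ (LinearMap.ker (S : G →ₗ[ℂ] K)) :=
    kerEquiv.symm.finiteDimensional
  -- the range criterion map
  set F : K →L[ℂ] W :=
    pW - (pW.comp (S.comp X.subtypeL)).comp ((eS.symm : R →L[ℂ] X).comp pR) with hFdef
  have hF_app : ∀ k : K, F k = pW k - pW (S ((eS.symm (pR k) : X) : G)) := fun k => rfl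
  have hmem : ∀ k : K, k ∈ LinearMap.range (S : G →ₗ[ℂ] K) ↔
      F k ∈ LinearMap.range (schur : N →ₗ[ℂ] W) := by
    intro k
    constructor
    · rintro ⟨v, rfl⟩
      refine ⟨pN v, ?_⟩
      have hsplit : ((pN v : G) : G) + ((pX v : G) : G) = v := hsumG v
      have h1 : pR (S v) = pR (S ((pN v : G))) + eS (pX v) := by
        rw [heS, ← map_add, ← map_add, hsplit]
      have h2 : eS.symm (pR (S v)) = eS.symm (pR (S ((pN v : G)))) + pX v := by
        rw [h1, map_add, ContinuousLinearEquiv.symm_apply_apply]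
      show schur (pN v) = F (S v)
      rw [hschur_app, hF_app, h2]
      have h3 : (((eS.symm (pR (S ((pN v : G)))) + pX v : X)) : G) =
          ((eS.symm (pR (S ((pN v : G)))) : X) : G) + ((pX v : G) : G) := rfl
      rw [h3, map_add, map_add]
      have h4 : pW (S v) = pW (S ((pN v : G))) + pW (S ((pX v : G))) := by
        rw [← map_add, ← map_add, hsplit]
      rw [h4]
      abel
    · rintro ⟨n, hn⟩
      set w : G := ((eS.symm (pR k) : X) : G) with hw
      refine ⟨j n + w, ?_⟩
      have hpr : pR (S (j n + w)) = pR k := by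
        rw [map_add, map_add, (hSj n).1, zero_add]
        have h5 : pR (S w) = eS (eS.symm (pR k)) := (heS _).symm
        rw [h5, ContinuousLinearEquiv.apply_symm_apply]
      have hpw : pW (S (j n + w)) = pW k := by
        have hn' : schur n = F k := hn
        rw [map_add, map_add, (hSj n).2, hn', hF_app]
        rw [← hw]
        abel
      calc S (j n + w) = ((pR (S (j n + w)) : K)) + ((pW (S (j n + w)) : K)) :=
            (hsumK _).symm
      _ = ((pR k : K)) + ((pW k : K)) := by rw [hpr, hpw]
      _ = k := hsumK k
  have hrangeSet : ((LinearMap.range (S : G →ₗ[ℂ] K) : Submodule ℂ K) : Set K) =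
      F ⁻¹' ((LinearMap.range (schur : N →ₗ[ℂ] W) : Submodule ℂ W) : Set W) := by
    ext k
    simpa using hmem k
  have hclosed' : IsClosed ((LinearMap.range (S : G →ₗ[ℂ] K) : Submodule ℂ K) : Set K) := by
    rw [hrangeSet]
    exact (Submodule.closed_of_finiteDimensional _).preimage F.continuous
  -- the cokernel comparison
  set ψ : W →ₗ[ℂ] K ⧸ (LinearMap.range (S : G →ₗ[ℂ] K)) :=
    (LinearMap.range (S : G →ₗ[ℂ] K)).mkQ.comp W.subtype with hψdef
  have hψsurj : Function.Surjective ψ := by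
    intro z
    obtain ⟨k, rfl⟩ := Submodule.mkQ_surjective _ z
    set w' : G := ((eS.symm (pR k) : X) : G) with hw'
    set k' : K := k - S w' with hk'
    have h0 : pR k' = 0 := by
      rw [hk', map_sub]
      have h5 : pR (S w') = eS (eS.symm (pR k)) := (heS _).symm
      rw [h5, ContinuousLinearEquiv.apply_symm_apply, sub_self]
    have h1 : ((pW k' : K)) = k' := by
      have h6 := hsumK k'
      rw [h0] at h6
      simpa using h6
    refine ⟨pW k', ?_⟩
    show Submodule.Quotient.mk ((pW k' : K)) = Submodule.Quotient.mk k
    rw [Submodule.Quotient.eq, h1, hk']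
    have h7 : k - S w' - k = -(S w') := by abel
    rw [h7]
    exact Submodule.neg_mem _ ⟨w', rfl⟩
  have hψker : LinearMap.ker ψ = LinearMap.range (schur : N →ₗ[ℂ] W) := by
    ext w
    have hFw : F ((w : K)) = (w : W) := by
      rw [hF_app, hpRW _ w.2]
      simp [hpWW w]
    have h8 : ψ w = 0 ↔ (w : K) ∈ LinearMap.range (S : G →ₗ[ℂ] K) := by
      rw [hψdef]
      simp only [LinearMap.comp_apply, Submodule.coe_subtype, Submodule.mkQ_apply,
        Submodule.Quotient.mk_eq_zero]
    rw [LinearMap.mem_ker, h8, hmem, hFw]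
  have cokerEquiv : (K ⧸ LinearMap.range (S : G →ₗ[ℂ] K)) ≃ₗ[ℂ]
      (W ⧸ LinearMap.range (schur : N →ₗ[ℂ] W)) :=
    ((Submodule.quotEquivOfEq _ _ hψker).symm.trans
      (ψ.quotKerEquivOfSurjective hψsurj)).symm
  haveI cokfin : FiniteDimensional ℂ (K ⧸ LinearMap.range (S : G →ₗ[ℂ] K)) :=
    cokerEquiv.symm.finiteDimensional
  have hrn : finrank ℂ (LinearMap.range (schur : N →ₗ[ℂ] W)) +
      finrank ℂ (LinearMap.ker (schur : N →ₗ[ℂ] W)) = finrank ℂ N :=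
    LinearMap.finrank_range_add_finrank_ker (schur : N →ₗ[ℂ] W)
  have hqr : finrank ℂ (W ⧸ LinearMap.range (schur : N →ₗ[ℂ] W)) +
      finrank ℂ (LinearMap.range (schur : N →ₗ[ℂ] W)) = finrank ℂ W :=
    Submodule.finrank_quotient_add_finrank _
  have hker_eq : finrank ℂ (LinearMap.ker (S : G →ₗ[ℂ] K)) =
      finrank ℂ (LinearMap.ker (schur : N →ₗ[ℂ] W)) := kerEquiv.finrank_eq
  have hcok_eq : finrank ℂ (K ⧸ LinearMap.range (S : G →ₗ[ℂ] K)) =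
      finrank ℂ (W ⧸ LinearMap.range (schur : N →ₗ[ℂ] W)) := cokerEquiv.finrank_eq
  refine ⟨hclosed', kerfin, cokfin, ?_, ?_, ?_⟩
  · rw [hker_eq]
    exact Submodule.finrank_le _
  · rw [hcok_eq, ← hfW]
    exact Submodule.finrank_quotient_le _
  · rw [hker_eq, hcok_eq, ← hfW]
    have hNker : finrank ℂ N = finrank ℂ (LinearMap.ker (T : G →ₗ[ℂ] K)) := rfl
    omega


section Glue
variable {H₁ H₂ : Type*}
    [NormedAddCommGroup H₁] [InnerProductSpace ℂ H₁] [CompleteSpace H₁]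
    [NormedAddCommGroup H₂] [InnerProductSpace ℂ H₂] [CompleteSpace H₂]
    (P : H₁ →ₗ.[ℂ] H₂)

noncomputable def grphL : Submodule ℂ (WithLp 2 (H₁ × H₂)) :=
  P.graph.comap (WithLp.linearEquiv 2 ℂ (H₁ × H₂) : WithLp 2 (H₁ × H₂) →ₗ[ℂ] H₁ × H₂)

theorem grphL_closed (h : IsClosed (P.graph : Set (H₁ × H₂))) :
    IsClosed ((grphL P : Submodule ℂ (WithLp 2 (H₁ × H₂))) : Set (WithLp 2 (H₁ × H₂))) := by
  have : ((grphL P : Submodule ℂ (WithLp 2 (H₁ × H₂))) : Set (WithLp 2 (H₁ × H₂))) =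
      (WithLp.prodContinuousLinearEquiv 2 ℂ H₁ H₂) ⁻¹' (P.graph : Set (H₁ × H₂)) := rfl
  rw [this]
  exact h.preimage (WithLp.prodContinuousLinearEquiv 2 ℂ H₁ H₂).continuous

noncomputable def TofP : (grphL P) →L[ℂ] H₂ :=
  (ContinuousLinearMap.snd ℂ H₁ H₂).comp
    (((WithLp.prodContinuousLinearEquiv 2 ℂ H₁ H₂ : WithLp 2 (H₁ × H₂) →L[ℂ] H₁ × H₂)).comp
      (grphL P).subtypeL)

noncomputable def pi₁ : (grphL P) →L[ℂ] H₁ :=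
  (ContinuousLinearMap.fst ℂ H₁ H₂).comp
    (((WithLp.prodContinuousLinearEquiv 2 ℂ H₁ H₂ : WithLp 2 (H₁ × H₂) →L[ℂ] H₁ × H₂)).comp
      (grphL P).subtypeL)

theorem norm_pi₁_apply_le (g : grphL P) : ‖pi₁ P g‖ ≤ ‖g‖ := by
  have h2 : ‖(g : WithLp 2 (H₁ × H₂))‖ ^ 2 =
      ‖(g : WithLp 2 (H₁ × H₂)).fst‖ ^ 2 + ‖(g : WithLp 2 (H₁ × H₂)).snd‖ ^ 2 :=
    WithLp.prod_norm_sq_eq_of_L2 _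
  have hle : ‖pi₁ P g‖ ^ 2 ≤ ‖(g : WithLp 2 (H₁ × H₂))‖ ^ 2 := by
    have : pi₁ P g = (g : WithLp 2 (H₁ × H₂)).fst := rfl
    rw [this, h2]
    nlinarith [sq_nonneg ‖(g : WithLp 2 (H₁ × H₂)).snd‖]
  have h3 : ‖(g : WithLp 2 (H₁ × H₂))‖ = ‖g‖ := rfl
  nlinarith [norm_nonneg (pi₁ P g), norm_nonneg g, hle, h3]

noncomputable def phi0 : P.domain →ₗ[ℂ] (grphL P) :=
  LinearMap.codRestrict (grphL P)
    ((WithLp.linearEquiv 2 ℂ (H₁ × H₂)).symm.toLinearMap.comp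
      (P.domain.subtype.prod P.toFun))
    (fun x => by
      show (WithLp.linearEquiv 2 ℂ (H₁ × H₂))
        ((WithLp.linearEquiv 2 ℂ (H₁ × H₂)).symm ((x : H₁), P x)) ∈ P.graph
      rw [LinearEquiv.apply_symm_apply]
      exact P.mem_graph x)

theorem phi0_fst (x : P.domain) : pi₁ P (phi0 P x) = (x : H₁) := rfl

theorem phi0_snd (x : P.domain) : TofP P (phi0 P x) = P x := rfl

theorem phi0_bijective : Function.Bijective (phi0 P) := by
  constructor
  · intro a b hab
    have := congrArg (pi₁ P) hab
    rw [phi0_fst, phi0_fst] at this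
    exact Subtype.ext this
  · rintro ⟨g, hg⟩
    have hg' : (WithLp.linearEquiv 2 ℂ (H₁ × H₂)) g ∈ P.graph := hg
    rw [LinearPMap.mem_graph_iff] at hg'
    obtain ⟨y, hy1, hy2⟩ := hg'
    refine ⟨y, Subtype.ext ?_⟩
    show (WithLp.linearEquiv 2 ℂ (H₁ × H₂)).symm ((y : H₁), P y) = g
    have hpair : ((y : H₁), P y) = (WithLp.linearEquiv 2 ℂ (H₁ × H₂)) g := Prod.ext hy1 hy2
    rw [hpair, LinearEquiv.symm_apply_apply]

noncomputable def phiP : P.domain ≃ₗ[ℂ] (grphL P) :=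
  LinearEquiv.ofBijective (phi0 P) (phi0_bijective P)

theorem P_toFun_eq : P.toFun = ((TofP P : (grphL P) →ₗ[ℂ] H₂)).comp (phiP P : P.domain →ₗ[ℂ] (grphL P)) := by
  ext x
  exact (phi0_snd P x).symm

theorem addBounded_toFun_eq (A : H₁ →L[ℂ] H₂) :
    (addBounded P A).toFun =
      (((TofP P + A.comp (pi₁ P)) : (grphL P) →L[ℂ] H₂) : (grphL P) →ₗ[ℂ] H₂).comp
        (phiP P : P.domain →ₗ[ℂ] (grphL P)) := by
  ext x
  show P x + A (x : H₁) = TofP P (phi0 P x) + A (pi₁ P (phi0 P x))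
  rfl

end Glue

theorem addBounded_graph_closed
    {H₁ H₂ : Type*}
    [NormedAddCommGroup H₁] [InnerProductSpace ℂ H₁] [CompleteSpace H₁]
    [NormedAddCommGroup H₂] [InnerProductSpace ℂ H₂] [CompleteSpace H₂]
    (P : H₁ →ₗ.[ℂ] H₂) (A : H₁ →L[ℂ] H₂) (h : IsClosed (P.graph : Set (H₁ × H₂))) :
    IsClosed ((addBounded P A).graph : Set (H₁ × H₂)) := by
  have hc : Continuous (fun p : H₁ × H₂ => ((p.1, p.2 - A p.1) : H₁ × H₂)) := by
    refine Continuous.prodMk continuous_fst ?_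
    exact continuous_snd.sub (A.continuous.comp continuous_fst)
  have hset : ((addBounded P A).graph : Set (H₁ × H₂)) =
      (fun p : H₁ × H₂ => ((p.1, p.2 - A p.1) : H₁ × H₂)) ⁻¹' (P.graph : Set (H₁ × H₂)) := by
    ext p
    simp only [Set.mem_preimage, SetLike.mem_coe, LinearPMap.mem_graph_iff]
    constructor
    · rintro ⟨y, hy1, hy2⟩
      refine ⟨y, hy1, ?_⟩
      have h2 : (addBounded P A) y = P y + A (y : H₁) := rfl
      rw [h2] at hy2
      rw [← hy2, ← hy1]
      show (P y : H₂) = P y + A (y : H₁) - A (y : H₁)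
      abel
    · rintro ⟨y, hy1, hy2⟩
      refine ⟨y, hy1, ?_⟩
      show P y + A (y : H₁) = p.2
      have h3 : (P y : H₂) = p.2 - A p.1 := hy2
      rw [h3, ← hy1]
      abel
  rw [hset]
  exact h.preimage hc

set_option maxHeartbeats 1000000
set_option synthInstance.maxHeartbeats 400000

/-- small bounded perturbations of an unbounded Fredholm operator are
Fredholm with the same index, and the kernel dimension and range codimension do not
increase. -/
theorem stmt_2
    {H₁ H₂ : Type*}
    [NormedAddCommGroup H₁] [InnerProductSpace ℂ H₁] [CompleteSpace H₁]
    [NormedAddCommGroup H₂] [InnerProductSpace ℂ H₂] [CompleteSpace H₂]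
    (P : H₁ →ₗ.[ℂ] H₂) (hF : IsFredholmPMap P) :
    ∃ ε > 0, ∀ A : H₁ →L[ℂ] H₂, ‖A‖ < ε →
      IsFredholmPMap (addBounded P A) ∧
      indPMap (addBounded P A) = indPMap P ∧
      finrank ℂ (LinearMap.ker (addBounded P A).toFun) ≤
        finrank ℂ (LinearMap.ker P.toFun) ∧
      finrank ℂ (H₂ ⧸ LinearMap.range (addBounded P A).toFun) ≤
        finrank ℂ (H₂ ⧸ LinearMap.range P.toFun) := by
  obtain ⟨hg, hr, hk, hc⟩ := hF
  haveI : CompleteSpace (grphL P) := (grphL_closed P hg).completeSpace_coe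
  have hPcomp := P_toFun_eq P
  have hrangeP : LinearMap.range P.toFun =
      LinearMap.range (TofP P : grphL P →ₗ[ℂ] H₂) := by
    rw [hPcomp]
    exact LinearMap.range_comp_of_range_eq_top _ (LinearEquiv.range (phiP P))
  have hkerPeq : LinearMap.ker P.toFun =
      Submodule.comap ((phiP P : P.domain →ₗ[ℂ] grphL P))
        (LinearMap.ker (TofP P : grphL P →ₗ[ℂ] H₂)) := by
    rw [hPcomp]; exact LinearMap.ker_comp _ _
  have kerPequiv : LinearMap.ker P.toFun ≃ₗ[ℂ]
      LinearMap.ker (TofP P : grphL P →ₗ[ℂ] H₂) :=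
    (LinearEquiv.ofEq _ _ hkerPeq).trans (LinearEquiv.ofSubmodule' (phiP P) _)
  haveI hkT : FiniteDimensional ℂ (LinearMap.ker (TofP P : grphL P →ₗ[ℂ] H₂)) := by
    haveI := hk
    exact kerPequiv.finiteDimensional
  have hrT : IsClosed ((LinearMap.range (TofP P : grphL P →ₗ[ℂ] H₂) :
      Submodule ℂ H₂) : Set H₂) := by
    rw [← hrangeP]; exact hr
  haveI hcT : FiniteDimensional ℂ (H₂ ⧸ LinearMap.range (TofP P : grphL P →ₗ[ℂ] H₂)) := by
    rw [← hrangeP]; exact hc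
  obtain ⟨ε, hε, hcore⟩ := core_stab (TofP P) hkT hrT hcT
  refine ⟨ε, hε, fun A hA => ?_⟩
  set BA : grphL P →L[ℂ] H₂ := A.comp (pi₁ P) with hBA
  have hBAle : ‖BA‖ ≤ ‖A‖ := by
    refine ContinuousLinearMap.opNorm_le_bound BA (norm_nonneg A) (fun g => ?_)
    calc ‖BA g‖ = ‖A (pi₁ P g)‖ := rfl
    _ ≤ ‖A‖ * ‖pi₁ P g‖ := A.le_opNorm _
    _ ≤ ‖A‖ * ‖g‖ := mul_le_mul_of_nonneg_left (norm_pi₁_apply_le P g) (norm_nonneg A)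
  obtain ⟨hcl, hkfin, hcfin, hkle, hcle, hind⟩ := hcore BA (lt_of_le_of_lt hBAle hA)
  have hAcomp := addBounded_toFun_eq P A
  have hrangeA : LinearMap.range (addBounded P A).toFun =
      LinearMap.range ((TofP P + BA : grphL P →L[ℂ] H₂) : grphL P →ₗ[ℂ] H₂) := by
    rw [hAcomp]
    exact LinearMap.range_comp_of_range_eq_top _ (LinearEquiv.range (phiP P))
  have hkerAeq : LinearMap.ker (addBounded P A).toFun =
      Submodule.comap ((phiP P : P.domain →ₗ[ℂ] grphL P))
        (LinearMap.ker ((TofP P + BA : grphL P →L[ℂ] H₂) : grphL P →ₗ[ℂ] H₂)) := by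
    rw [hAcomp]; exact LinearMap.ker_comp _ _
  have kerAequiv : LinearMap.ker (addBounded P A).toFun ≃ₗ[ℂ]
      LinearMap.ker ((TofP P + BA : grphL P →L[ℂ] H₂) : grphL P →ₗ[ℂ] H₂) := by
    have e := LinearEquiv.ofSubmodule' (phiP P)
      (LinearMap.ker ((TofP P + BA : grphL P →L[ℂ] H₂) : grphL P →ₗ[ℂ] H₂))
    rw [← hkerAeq] at e
    exact e
  have e1 : finrank ℂ (LinearMap.ker (addBounded P A).toFun) =
      finrank ℂ (LinearMap.ker ((TofP P + BA : grphL P →L[ℂ] H₂) : grphL P →ₗ[ℂ] H₂)) :=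
    kerAequiv.finrank_eq
  have e3 : finrank ℂ (LinearMap.ker P.toFun) =
      finrank ℂ (LinearMap.ker (TofP P : grphL P →ₗ[ℂ] H₂)) := kerPequiv.finrank_eq
  refine ⟨⟨addBounded_graph_closed P A hg, ?_, ?_, ?_⟩, ?_, ?_, ?_⟩
  · rw [hrangeA]; exact hcl
  · haveI : FiniteDimensional ℂ
        (LinearMap.ker ((TofP P + BA : grphL P →L[ℂ] H₂) : grphL P →ₗ[ℂ] H₂)) := hkfin
    exact kerAequiv.symm.finiteDimensional
  · rw [hrangeA]; exact hcfin
  · show (finrank ℂ (LinearMap.ker (addBounded P A).toFun) : ℤ) -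
        (finrank ℂ (H₂ ⧸ LinearMap.range (addBounded P A).toFun) : ℤ) =
      (finrank ℂ (LinearMap.ker P.toFun) : ℤ) -
        (finrank ℂ (H₂ ⧸ LinearMap.range P.toFun) : ℤ)
    rw [e1, e3, hrangeA, hrangeP]
    exact hind
  · rw [e1, e3]
    exact hkle
  · rw [hrangeA, hrangeP]
    exact hcle
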